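/- arXiv:math/0607353 — 5 statements merged into one kernel-verified Lean document; each statement's English description precedes it below -/
import Mathlib

section
/- Let {X_α, φ_{αβ}} be an inverse system of chain connected uniform spaces over a directed partially ordered set, with uniformly continuous bonding maps. If every projection φ_α : X = lim X_α → X_α is surjective, then the inverse limit X, equipped with the subspace uniformity inherited from the product uniformity on Π_α X_α, is chain connected. -/
universe u v w

open scoped Uniformity

/-- A uniform space is *chain connected* if every uniformly continuous function from it
into a discrete uniform space is constant. -/
def ChainConnected (X : Type u) [UniformSpace X] : Prop :=
  ∀ (Y : Type v) (f : X → Y), @UniformContinuous X Y _ ⊥ f → ∀ x y : X, f x = f y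

/-- The inverse limit of an inverse system `Xs` with bonding maps `φ`.  When the `Xs i` are
uniform spaces it carries the subspace uniformity inherited from the product uniformity. -/
abbrev InvLim {ι : Type u} [Preorder ι] (Xs : ι → Type v)
    (φ : ∀ i j : ι, i ≤ j → Xs j → Xs i) : Type (max u v) :=
  {x : ∀ i, Xs i // ∀ (i j : ι) (h : i ≤ j), φ i j h (x j) = x i}

/-- (Statement 5) Let `{X_α, φ_{αβ}}` be an inverse system of chain connected uniform spaces
over a directed partially ordered set, with uniformly continuous bonding maps.  If every
projection from the inverse limit is surjective, then the inverse limit (with the subspace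
uniformity inherited from the product uniformity) is chain connected. -/
theorem chainConnected_invLim {ι : Type u} [PartialOrder ι] [IsDirected ι (· ≤ ·)]
    (Xs : ι → Type v) [∀ i, UniformSpace (Xs i)]
    (φ : ∀ i j : ι, i ≤ j → Xs j → Xs i)
    (hφuc : ∀ (i j : ι) (h : i ≤ j), UniformContinuous (φ i j h))
    (hφid : ∀ (i : ι) (x : Xs i), φ i i le_rfl x = x)
    (hφcomp : ∀ (i j k : ι) (hij : i ≤ j) (hjk : j ≤ k) (x : Xs k),
      φ i j hij (φ j k hjk x) = φ i k (hij.trans hjk) x)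
    (hcc : ∀ i : ι, ChainConnected.{v, w} (Xs i))
    (hsurj : ∀ i : ι, Function.Surjective (fun x : InvLim Xs φ => x.1 i)) :
    ChainConnected.{max u v, w} (InvLim Xs φ) := by
  intro Y f hf x y
  by_cases hι : Nonempty ι
  · haveI := hι
    -- the key set
    have hS : {p : InvLim Xs φ × InvLim Xs φ | f p.1 = f p.2} ∈ 𝓤 (InvLim Xs φ) := by
      have := hf (by simp [bot_uniformity] : SetRel.id ∈ @uniformity Y ⊥)
      simpa [SetRel.id] using this
    -- describe the uniformity of the inverse limit
    have hUdesc : 𝓤 (InvLim Xs φ) =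
        ⨅ i, Filter.comap (fun p : InvLim Xs φ × InvLim Xs φ => (p.1.1 i, p.2.1 i))
          (𝓤 (Xs i)) := by
      rw [uniformity_subtype, Pi.uniformity, Filter.comap_iInf]
      simp [Filter.comap_comap, Function.comp_def]
    have hdir : Directed (· ≥ ·)
        (fun i => Filter.comap (fun p : InvLim Xs φ × InvLim Xs φ => (p.1.1 i, p.2.1 i))
          (𝓤 (Xs i))) := by
      intro i j
      obtain ⟨k, hik, hjk⟩ := directed_of (· ≤ ·) i j
      refine ⟨k, ?_, ?_⟩
      · -- F k ≤ F i
        have key : ∀ p : InvLim Xs φ × InvLim Xs φ,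
            (p.1.1 i, p.2.1 i) = Prod.map (φ i k hik) (φ i k hik) (p.1.1 k, p.2.1 k) := by
          intro p; simp [Prod.map, p.1.2 i k hik, p.2.2 i k hik]
        calc Filter.comap (fun p : InvLim Xs φ × InvLim Xs φ => (p.1.1 k, p.2.1 k)) (𝓤 (Xs k))
            ≤ Filter.comap (fun p : InvLim Xs φ × InvLim Xs φ => (p.1.1 k, p.2.1 k))
              (Filter.comap (Prod.map (φ i k hik) (φ i k hik)) (𝓤 (Xs i))) :=
              Filter.comap_mono ((hφuc i k hik).le_comap)
          _ = Filter.comap (fun p : InvLim Xs φ × InvLim Xs φ => (p.1.1 i, p.2.1 i))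
              (𝓤 (Xs i)) := by
              rw [Filter.comap_comap]; congr 1; funext p; exact (key p).symm
      · have key : ∀ p : InvLim Xs φ × InvLim Xs φ,
            (p.1.1 j, p.2.1 j) = Prod.map (φ j k hjk) (φ j k hjk) (p.1.1 k, p.2.1 k) := by
          intro p; simp [Prod.map, p.1.2 j k hjk, p.2.2 j k hjk]
        calc Filter.comap (fun p : InvLim Xs φ × InvLim Xs φ => (p.1.1 k, p.2.1 k)) (𝓤 (Xs k))
            ≤ Filter.comap (fun p : InvLim Xs φ × InvLim Xs φ => (p.1.1 k, p.2.1 k))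
              (Filter.comap (Prod.map (φ j k hjk) (φ j k hjk)) (𝓤 (Xs j))) :=
              Filter.comap_mono ((hφuc j k hjk).le_comap)
          _ = Filter.comap (fun p : InvLim Xs φ × InvLim Xs φ => (p.1.1 j, p.2.1 j))
              (𝓤 (Xs j)) := by
              rw [Filter.comap_comap]; congr 1; funext p; exact (key p).symm
    rw [hUdesc, Filter.mem_iInf_of_directed hdir] at hS
    obtain ⟨k, hSk⟩ := hS
    rw [Filter.mem_comap] at hSk
    obtain ⟨U, hU, hUsub⟩ := hSk
    -- section of the projection at k
    choose s hs using hsurj k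
    set g : Xs k → Y := fun z => f (s z) with hg
    have hgkey : ∀ a b : Xs k, (a, b) ∈ U → g a = g b := by
      intro a b hab
      have : ((s a, s b) : InvLim Xs φ × InvLim Xs φ) ∈
          (fun p : InvLim Xs φ × InvLim Xs φ => (p.1.1 k, p.2.1 k)) ⁻¹' U := by
        simpa [hs a, hs b] using hab
      exact hUsub this
    have hguc : @UniformContinuous (Xs k) Y _ ⊥ g := by
      intro V hV
      rw [bot_uniformity, Filter.mem_principal] at hV
      rw [Filter.mem_map]
      exact Filter.mem_of_superset hU fun p hp =>
        hV (show ((fun q : Xs k × Xs k => (g q.1, g q.2)) p) ∈ SetRel.id from hgkey p.1 p.2 hp)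
    have hgconst := hcc k Y g hguc
    have hfg : ∀ z : InvLim Xs φ, f z = g (z.1 k) := by
      intro z
      have : ((z, s (z.1 k)) : InvLim Xs φ × InvLim Xs φ) ∈
          (fun p : InvLim Xs φ × InvLim Xs φ => (p.1.1 k, p.2.1 k)) ⁻¹' U := by
        simp only [Set.mem_preimage, hs]
        exact refl_mem_uniformity hU
      exact hUsub this
    rw [hfg x, hfg y, hgconst (x.1 k) (y.1 k)]
  · have hxy : x = y := Subtype.ext (funext fun i => absurd ⟨i⟩ hι)
    rw [hxy]
end

section
/- (Chain Lifting Lemma) Let X, Y be uniform spaces, f : X → Y a uniformly continuous surjection, F an entourage of Y, and E := (f × f)⁻¹(F). Let c be an E-chain in X and let η be an F-homotopy from the F-chain d := f(c) (the termwise image of c) to another F-chain d′. Then η lifts to an E-homotopy from c: there exist an E-chain c′ in X and an E-homotopy κ from c to c′ such that the termwise image f(κ) equals η; in particular f(c′) = d′. -/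
universe u u'

/-- `l` is a (nonempty) `E`-chain, i.e. a finite sequence of points of `X` with all
consecutive pairs in `E`. -/
def IsChainList {X : Type u} (E : Set (X × X)) (l : List X) : Prop :=
  l ≠ [] ∧ l.Chain' (fun a b => (a, b) ∈ E)

/-- `l'` is an (elementary) `E`-extension of `l`: it is obtained from the `E`-chain
`l = (x₀, …, xₙ)` by inserting one point `x` strictly between two consecutive points
(keeping the endpoints fixed), the result `l'` again being an `E`-chain. -/
def ChainExt {X : Type u} (E : Set (X × X)) (l l' : List X) : Prop :=
  ∃ (s t : List X) (x : X), s ≠ [] ∧ t ≠ [] ∧ l = s ++ t ∧ l' = s ++ x :: t ∧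
    l.Chain' (fun a b => (a, b) ∈ E) ∧ l'.Chain' (fun a b => (a, b) ∈ E)

/-- Two `E`-chains are `E`-related if one is an `E`-extension of the other. -/
def ChainRelated {X : Type u} (E : Set (X × X)) (l l' : List X) : Prop :=
  ChainExt E l l' ∨ ChainExt E l' l


section Aux

variable {X : Type*} {Y : Type*} (f : X → Y) {E : Set (X × X)} {F : Set (Y × Y)}

private lemma chain_map_iff (hEdef : E = (fun p : X × X => (f p.1, f p.2)) ⁻¹' F)
    (l : List X) :
    l.Chain' (fun a b => (a, b) ∈ E) ↔ (l.map f).Chain' (fun a b => (a, b) ∈ F) := by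
  rw [List.Chain', List.Chain', List.isChain_map, hEdef]
  rfl

private lemma lift_related (hsurj : Function.Surjective f)
    (hEdef : E = (fun p : X × X => (f p.1, f p.2)) ⁻¹' F)
    (c : List X) (d' : List Y) (h : ChainRelated F (c.map f) d') :
    ∃ c' : List X, c'.map f = d' ∧ ChainRelated E c c' := by
  rcases h with ⟨s, t, y, hs, ht, heq, heq', hch, hch'⟩ | ⟨s, t, y, hs, ht, heq, heq', hch, hch'⟩
  · -- insertion: c.map f = s ++ t, d' = s ++ y :: t
    obtain ⟨a, b, hab, ha, hb⟩ := List.map_eq_append_iff.mp heq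
    obtain ⟨x, hx⟩ := hsurj y
    refine ⟨a ++ x :: b, by simp [ha, hb, hx, heq'], Or.inl ⟨a, b, x, ?_, ?_, hab, rfl, ?_, ?_⟩⟩
    · intro h0; rw [h0] at ha; exact hs ha.symm
    · intro h0; rw [h0] at hb; exact ht hb.symm
    · exact (chain_map_iff f hEdef c).mpr hch
    · rw [chain_map_iff f hEdef]
      simpa [ha, hb, hx] using heq' ▸ hch'
  · -- deletion: c.map f = s ++ y :: t (heq'), d' = s ++ t (heq)
    obtain ⟨a, b0, hab, ha, hb0⟩ := List.map_eq_append_iff.mp heq'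
    obtain ⟨x, b, hb, hx, hbt⟩ := List.map_eq_cons_iff.mp hb0
    refine ⟨a ++ b, by simp [ha, hbt, heq], Or.inr ⟨a, b, x, ?_, ?_, rfl, by rw [hab, hb], ?_, ?_⟩⟩
    · intro h0; rw [h0] at ha; exact hs ha.symm
    · intro h0; rw [h0] at hbt; exact ht hbt.symm
    · rw [chain_map_iff f hEdef]
      simpa [ha, hbt, heq] using heq ▸ hch
    · exact (chain_map_iff f hEdef c).mpr hch'

private lemma lift_homotopy (hsurj : Function.Surjective f)
    (hEdef : E = (fun p : X × X => (f p.1, f p.2)) ⁻¹' F) :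
    ∀ (η : List (List Y)) (c : List X), IsChainList E c →
    η.head? = some (c.map f) →
    (∀ l ∈ η, IsChainList F l) → η.Chain' (ChainRelated F) →
    ∃ (c' : List X) (κ : List (List X)),
      (∀ l ∈ κ, IsChainList E l) ∧
      κ.Chain' (ChainRelated E) ∧
      κ.head? = some c ∧ κ.getLast? = some c' ∧
      κ.map (List.map f) = η := by
  intro η
  induction η with
  | nil => intro c _ h; simp at h
  | cons d rest ih =>
    intro c hc hhead hmem hchain
    have hd : d = c.map f := by simpa using hhead
    cases rest with
    | nil =>
      exact ⟨c, [c], by simpa using hc, List.isChain_singleton c, rfl, rfl, by simp [hd]⟩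
    | cons d₂ rest₂ =>
      have hrel : ChainRelated F (c.map f) d₂ := hd ▸ (List.isChain_cons_cons.mp hchain).1
      obtain ⟨c₂, hc₂map, hc₂rel⟩ := lift_related f hsurj hEdef c d₂ hrel
      have hc₂ : IsChainList E c₂ := by
        have hd₂ : IsChainList F d₂ := hmem d₂ (by simp)
        refine ⟨?_, (chain_map_iff f hEdef c₂).mpr (hc₂map ▸ hd₂.2)⟩
        intro h0
        rw [h0] at hc₂map
        exact hd₂.1 hc₂map.symm
      obtain ⟨c', κ, hκ₁, hκ₂, hκ₃, hκ₄, hκ₅⟩ := ih c₂ hc₂ (by simp [hc₂map])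
        (fun l hl => hmem l (List.mem_cons_of_mem _ hl)) (List.isChain_cons_cons.mp hchain).2
      refine ⟨c', c :: κ, ?_, ?_, rfl, ?_, ?_⟩
      · intro l hl
        rcases List.mem_cons.mp hl with h | h
        · exact h ▸ hc
        · exact hκ₁ l h
      · rw [List.Chain', List.isChain_cons]
        refine ⟨fun y hy => ?_, hκ₂⟩
        rw [hκ₃, Option.mem_def, Option.some_inj] at hy
        exact hy ▸ hc₂rel
      · rw [List.getLast?_cons, hκ₄]
        · cases κ with
          | nil => simp at hκ₃
          | cons a b => simp [List.getLast?_cons]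
      · simp [hd, hκ₅]

end Aux

/-- (Statement 7, Chain Lifting Lemma) Let `X, Y` be uniform spaces, `f : X → Y` a uniformly
continuous surjection, `F` an entourage of `Y` and `E := (f × f)⁻¹(F)`.  Let `c` be an
`E`-chain in `X` and `η` an `F`-homotopy (a finite sequence of `F`-chains, consecutive ones
`F`-related) from the `F`-chain `d := f(c)` to another `F`-chain `d′`.  Then `η` lifts to an
`E`-homotopy `κ` from `c` to an `E`-chain `c′` whose termwise image under `f` is exactly `η`;
in particular `f(c′) = d′`. -/
theorem chain_lifting {X : Type u} {Y : Type u'} [UniformSpace X] [UniformSpace Y]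
    (f : X → Y) (hf : UniformContinuous f) (hsurj : Function.Surjective f)
    (F : Set (Y × Y)) (hF : F ∈ uniformity Y) (hFsym : Prod.swap ⁻¹' F = F)
    (E : Set (X × X)) (hEdef : E = (fun p : X × X => (f p.1, f p.2)) ⁻¹' F)
    (c : List X) (hc : IsChainList E c)
    (η : List (List Y)) (d' : List Y)
    (hη₁ : ∀ l ∈ η, IsChainList F l)
    (hη₂ : η.Chain' (ChainRelated F))
    (hη₃ : η.head? = some (c.map f)) (hη₄ : η.getLast? = some d') :
    ∃ (c' : List X) (κ : List (List X)),
      (∀ l ∈ κ, IsChainList E l) ∧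
      κ.Chain' (ChainRelated E) ∧
      κ.head? = some c ∧ κ.getLast? = some c' ∧
      κ.map (List.map f) = η ∧ c'.map f = d' := by
  obtain ⟨c', κ, h1, h2, h3, h4, h5⟩ :=
    lift_homotopy f hsurj hEdef η c hc hη₃ hη₁ hη₂
  refine ⟨c', κ, h1, h2, h3, h4, h5, ?_⟩
  have : (κ.map (List.map f)).getLast? = some (c'.map f) := by
    rw [List.getLast?_map, h4]; rfl
  rw [h5, hη₄] at this
  exact (Option.some_injective _ this).symm
end

section
/- Let X be a compact Hausdorff topological space that is locally path connected, equipped with the unique uniformity compatible with its topology (whose entourages are precisely the neighborhoods of the diagonal in X × X, with a basis of open symmetric neighborhoods). Then X is uniformly locally pathwise connected: for every entourage E there is a symmetric entourage F ⊆ E such that every F-ball B(x,F) is open and path connected. -/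
open UniformSpace

universe u

/-- (Statement 10) Let `X` be a compact Hausdorff topological space that is locally path
connected, equipped with the unique uniformity compatible with its topology.  Then `X` is
uniformly locally pathwise connected: for every entourage `E` there is a symmetric entourage
`F ⊆ E` such that every `F`-ball `B(x,F)` is open and path connected. -/
theorem uniformly_locally_pathwise_connected_of_compact {X : Type u} [UniformSpace X]
    [CompactSpace X] [T2Space X] [LocallyPathConnectedSpace X] :
    ∀ E ∈ uniformity X, SetRel.IsSymm E →
      ∃ F ∈ uniformity X, SetRel.IsSymm F ∧ F ⊆ E ∧
        ∀ x : X, IsOpen (ball x F) ∧ IsPathConnected (ball x F) := by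
  intro E hE _
  obtain ⟨E', hE', hE'symm, hE'comp⟩ := comp_symm_mem_uniformity_sets hE
  -- choose open path connected neighborhoods inside E'-balls
  have hV : ∀ x : X, ∃ V : Set X, (IsOpen V ∧ x ∈ V ∧ IsPathConnected V) ∧ V ⊆ ball x E' := by
    intro x
    exact (isOpen_isPathConnected_basis x).mem_iff.mp (ball_mem_nhds x hE')
  choose V hVprop hVsub using hV
  have hVopen : ∀ x, IsOpen (V x) := fun x => (hVprop x).1
  have hVmem : ∀ x, x ∈ V x := fun x => (hVprop x).2.1
  have hVpc : ∀ x, IsPathConnected (V x) := fun x => (hVprop x).2.2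
  -- finite subcover
  obtain ⟨t, ht⟩ := isCompact_univ.elim_finite_subcover V hVopen
    (fun x _ => Set.mem_iUnion.mpr ⟨x, hVmem x⟩)
  set F : Set (X × X) := ⋃ x ∈ t, (V x) ×ˢ (V x) with hFdef
  have hFopen : IsOpen F := isOpen_biUnion fun x _ => (hVopen x).prod (hVopen x)
  have hdiag : Set.diagonal X ⊆ F := by
    rintro ⟨a, b⟩ hab
    obtain rfl : a = b := hab
    obtain ⟨x, hxt, hax⟩ := Set.mem_iUnion₂.mp (ht (Set.mem_univ a))
    exact Set.mem_iUnion₂.mpr ⟨x, hxt, hax, hax⟩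
  have hFmem : F ∈ uniformity X := by
    rw [← nhdsSet_diagonal_eq_uniformity]
    exact hFopen.mem_nhdsSet.mpr hdiag
  have hFsymm : SetRel.IsSymm F := by
    constructor
    intro a b h
    obtain ⟨x, hxt, h1, h2⟩ := Set.mem_iUnion₂.mp h
    exact Set.mem_iUnion₂.mpr ⟨x, hxt, h2, h1⟩
  have hFE : F ⊆ E := by
    rintro ⟨a, b⟩ hab
    obtain ⟨x, _, ha, hb⟩ := Set.mem_iUnion₂.mp hab
    exact hE'comp ⟨x, hE'symm.symm _ _ (hVsub x ha), hVsub x hb⟩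
  refine ⟨F, hFmem, hFsymm, hFE, fun y => ?_⟩
  -- description of the ball
  have hball : ball y F = ⋃ x ∈ {x : X | x ∈ t ∧ y ∈ V x}, V x := by
    ext z
    constructor
    · intro hz
      obtain ⟨x, hxt, hy, hz'⟩ := Set.mem_iUnion₂.mp hz
      exact Set.mem_iUnion₂.mpr ⟨x, ⟨hxt, hy⟩, hz'⟩
    · intro hz
      obtain ⟨x, ⟨hxt, hy⟩, hz'⟩ := Set.mem_iUnion₂.mp hz
      exact Set.mem_iUnion₂.mpr ⟨x, hxt, hy, hz'⟩
  constructor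
  · rw [hball]; exact isOpen_biUnion fun x _ => hVopen x
  · -- path connected: all the V x in the union contain y
    have hymem : y ∈ ball y F := hdiag rfl
    refine ⟨y, hymem, ?_⟩
    intro z hz
    obtain ⟨x, hxt, hy, hz'⟩ := Set.mem_iUnion₂.mp hz
    have hsub : V x ⊆ ball y F := fun w hw => Set.mem_iUnion₂.mpr ⟨x, hxt, hy, hw⟩
    exact ((hVpc x).joinedIn y hy z hz').mono hsub
end

section
/- Let X be a chain connected uniform space. If there is an entourage E of X such that every E-ball B(x,E) is a connected subset of X, then X is connected; moreover, for every n ≥ 1 every Eⁿ-ball is connected. -/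
open UniformSpace

universe u v

/-- `relPow E n` is the `n`-fold composition `Eⁿ` of the relation `E` with itself
(with `E⁰ = idRel`). -/
def relPow {X : Type u} (E : Set (X × X)) : ℕ → Set (X × X)
  | 0 => SetRel.id
  | n + 1 => SetRel.comp (relPow E n) E

lemma relPow_refl {X : Type u} {E : Set (X × X)} (hE : SetRel.id ⊆ E) :
    ∀ n, SetRel.id ⊆ relPow E n := by
  intro n
  induction n with
  | zero => exact le_refl _
  | succ n ih =>
    rintro ⟨x, y⟩ h
    obtain rfl : x = y := h
    exact ⟨x, ih rfl, hE rfl⟩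

/-- (Statement 12) Let `X` be a (nonempty) chain connected uniform space.  If there is an
entourage `E` of `X` such that every `E`-ball is a connected subset of `X`, then `X` is
connected; moreover, for every `n ≥ 1`, every `Eⁿ`-ball is connected. -/
theorem connected_of_chainConnected_of_connected_balls {X : Type u} [UniformSpace X]
    [Nonempty X] (hcc : ChainConnected.{u, v} X)
    (E : Set (X × X)) (hE : E ∈ uniformity X) (hEsym : SetRel.IsSymm E)
    (hb : ∀ x : X, IsConnected (ball x E)) :
    ConnectedSpace X ∧ ∀ (n : ℕ) (x : X), IsConnected (ball x (relPow E (n + 1))) := by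
  have hrefl : SetRel.id ⊆ E := by
    rintro ⟨x, y⟩ h
    obtain rfl : x = y := h
    exact refl_mem_uniformity hE
  have hxself : ∀ (n : ℕ) (x : X), x ∈ ball x (relPow E n) := fun n x =>
    relPow_refl hrefl n rfl
  -- connectedness of Eⁿ-balls
  have hballs : ∀ (n : ℕ) (x : X), IsConnected (ball x (relPow E (n + 1))) := by
    intro n
    induction n with
    | zero =>
      intro x
      have : ball x (relPow E 1) = ball x E := by
        ext z
        constructor
        · rintro ⟨y, hxy, hyz⟩
          obtain rfl : x = y := hxy
          exact hyz
        · intro h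
          exact ⟨x, rfl, h⟩
      rw [this]
      exact hb x
    | succ n ih =>
      intro x
      set S := ball x (relPow E (n + 1)) with hS
      have hkey : ball x (relPow E (n + 2)) = ⋃ y : S, (S ∪ ball (y : X) E) := by
        ext z
        constructor
        · rintro ⟨y, hy, hyz⟩
          exact Set.mem_iUnion.2 ⟨⟨y, hy⟩, Or.inr hyz⟩
        · intro hz
          rcases Set.mem_iUnion.1 hz with ⟨⟨y, hy⟩, hz⟩
          rcases hz with hz | hz
          · exact ⟨z, hz, refl_mem_uniformity hE⟩
          · exact ⟨y, hy, hz⟩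
      rw [hkey]
      constructor
      · exact ⟨x, Set.mem_iUnion.2 ⟨⟨x, hxself (n + 1) x⟩, Or.inl (hxself (n + 1) x)⟩⟩
      · apply isPreconnected_iUnion
        · exact ⟨x, Set.mem_iInter.2 fun y => Or.inl (hxself (n + 1) x)⟩
        · rintro ⟨y, hy⟩
          exact IsPreconnected.union y hy (mem_ball_self y hE)
            (ih x).isPreconnected (hb y).isPreconnected
  refine ⟨?_, hballs⟩
  -- connectedness of X
  obtain ⟨x⟩ := ‹Nonempty X›
  have hcover : ∀ z : X, ∃ n, z ∈ ball x (relPow E n) := by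
    set U : Set X := ⋃ n, ball x (relPow E n) with hU
    have hstep : ∀ ⦃y z : X⦄, (y, z) ∈ E → y ∈ U → z ∈ U := by
      intro y z hyz hy
      rcases Set.mem_iUnion.1 hy with ⟨n, hn⟩
      exact Set.mem_iUnion.2 ⟨n + 1, ⟨y, hn, hyz⟩⟩
    classical
    have hf : @UniformContinuous X (ULift.{v} Bool) _ ⊥ (fun z => ⟨decide (z ∈ U)⟩) := by
      have h1 : Filter.Tendsto
          (fun p : X × X => ((⟨decide (p.1 ∈ U)⟩ : ULift.{v} Bool), (⟨decide (p.2 ∈ U)⟩ : ULift.{v} Bool)))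
          (uniformity X) (Filter.principal SetRel.id) := by
        rw [Filter.tendsto_principal]
        filter_upwards [hE] with p hp
        have : (p.1 ∈ U) = (p.2 ∈ U) :=
          propext ⟨fun h => hstep hp h, fun h => hstep (hEsym.symm _ _ hp) h⟩
        show (⟨decide (p.1 ∈ U)⟩ : ULift.{v} Bool) = ⟨decide (p.2 ∈ U)⟩
        rw [this]
      exact h1
    intro z
    have heq := hcc (ULift.{v} Bool) (fun z => ⟨decide (z ∈ U)⟩) hf z x
    have hxU : x ∈ U := Set.mem_iUnion.2 ⟨0, rfl⟩
    have hd : decide (z ∈ U) = decide (x ∈ U) := congrArg ULift.down heq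
    have hz : z ∈ U := (decide_eq_decide.mp hd).2 hxU
    exact Set.mem_iUnion.1 hz
  have huniv : (Set.univ : Set X) = ⋃ n, ball x (relPow E n) := by
    apply Set.eq_of_subset_of_subset
    · intro z _
      rcases hcover z with ⟨n, hn⟩
      exact Set.mem_iUnion.2 ⟨n, hn⟩
    · exact Set.subset_univ _
  have hpre : IsPreconnected (Set.univ : Set X) := by
    rw [huniv]
    apply isPreconnected_iUnion
    · exact ⟨x, Set.mem_iInter.2 fun n => hxself n x⟩
    · intro n
      cases n with
      | zero =>
        have : ball x (relPow E 0) = {x} := by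
          ext z
          exact ⟨fun h => (h : x = z).symm, fun h => by simp [ball, relPow, SetRel.id, h]⟩
        rw [this]; exact isPreconnected_singleton
      | succ n => exact (hballs n x).isPreconnected
  exact { toPreconnectedSpace := ⟨hpre⟩, toNonempty := ‹Nonempty X› }
end

section
/- Let X be a chain connected uniform space. If there is an entourage E of X such that every E-ball B(x,E) is path connected, then X is path connected. -/
open UniformSpace

universe u v

/-- (Statement 13) Let `X` be a (nonempty) chain connected uniform space.  If there is an
entourage `E` of `X` such that every `E`-ball `B(x,E)` is path connected, then `X` is path
connected. -/
theorem pathConnected_of_chainConnected_of_pathConnected_balls {X : Type u} [UniformSpace X]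
    [Nonempty X] (hcc : ChainConnected.{u, v} X)
    (E : Set (X × X)) (hE : E ∈ uniformity X) (hEsym : Prod.swap ⁻¹' E = E)
    (hb : ∀ x : X, IsPathConnected (ball x E)) :
    PathConnectedSpace X := by
  obtain ⟨x₀⟩ := ‹Nonempty X›
  -- points related by `E` are joined, since both lie in the path-connected ball
  have hjoin : ∀ x y : X, (x, y) ∈ E → Joined x y := by
    intro x y hxy
    have hx : x ∈ ball x E := refl_mem_uniformity hE
    have hy : y ∈ ball x E := hxy
    exact (hb x).joinedIn x hx y hy |>.joined
  -- map to a two-element (Prop-valued) discrete uniform space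
  set f : X → ULift.{v} Prop := fun x => ULift.up (Joined x₀ x) with hf
  have huc : @UniformContinuous X (ULift.{v} Prop) _ ⊥ f := by
    show Filter.Tendsto (fun p : X × X => (f p.1, f p.2)) (uniformity X)
      (Filter.principal SetRel.id)
    rw [Filter.tendsto_principal]
    filter_upwards [hE] with p hp
    have : Joined x₀ p.1 ↔ Joined x₀ p.2 :=
      ⟨fun h => h.trans (hjoin _ _ hp), fun h => h.trans (hjoin _ _ hp).symm⟩
    show (f p.1, f p.2) ∈ SetRel.id
    simp only [hf, SetRel.mem_id]
    exact congrArg ULift.up (propext this)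
  have hconst := hcc _ f huc
  constructor
  · exact ⟨x₀⟩
  · intro x y
    have hx : Joined x₀ x := by
      have h : Joined x₀ x₀ = Joined x₀ x := congrArg ULift.down (hconst x₀ x)
      exact h ▸ Joined.refl x₀
    have hy : Joined x₀ y := by
      have h : Joined x₀ x₀ = Joined x₀ y := congrArg ULift.down (hconst x₀ y)
      exact h ▸ Joined.refl x₀
    exact hx.symm.trans hy
end
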